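/- Let w > 0 and consider the partition of ℝ³ into A, B, C, D defined in cylindrical coordinates [m,r,θ] around the diagonal with a fixed angle Θ ∈ [π/3, π]: A = {π/3 ≤ θ < Θ, d(·, P) ≥ w}, D = {Θ ≤ θ < π, d(·, P) ≥ w}, B = {π/3 ≤ θ < Θ, d(·,P) < w} ∪ {θ ∈ [0,π/3) ∪ [5π/3, 2π)}, C = ({Θ ≤ θ < π, d(·,P) < w} ∪ {θ ∈ [π, 5π/3)}) \ D', where P = {θ = Θ}. Then the Euclidean distance between A and D is at least w, the distance between A and C is at least w, and the distance between B and D is at least w. -/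

import Mathlib

open Real

noncomputable def pt (m r θ : ℝ) : EuclideanSpace ℝ (Fin 3) :=
  WithLp.toLp 2 ![m + Real.sqrt (2 / 3) * r * Real.cos (θ + 2 * π / 3),
    m + Real.sqrt (2 / 3) * r * Real.cos θ,
    m + Real.sqrt (2 / 3) * r * Real.cos (θ - 2 * π / 3)]

lemma cos_two_pi_div_three : Real.cos (2 * π / 3) = -(1/2) := by
  have h : (2 * π / 3 : ℝ) = π - π/3 := by ring
  rw [h, Real.cos_pi_sub, Real.cos_pi_div_three]

lemma sin_two_pi_div_three : Real.sin (2 * π / 3) = Real.sqrt 3 / 2 := by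
  have h : (2 * π / 3 : ℝ) = π - π/3 := by ring
  rw [h, Real.sin_pi_sub, Real.sin_pi_div_three]

lemma pt_dist_sq (m r θ m' r' θ' : ℝ) :
    dist (pt m r θ) (pt m' r' θ') ^ 2
      = 3 * (m - m') ^ 2 + r ^ 2 + r' ^ 2 - 2 * r * r' * Real.cos (θ - θ') := by
  rw [EuclideanSpace.dist_eq]
  rw [Real.sq_sqrt (by positivity)]
  simp only [pt, Fin.sum_univ_three, Matrix.cons_val_zero, Matrix.cons_val_one, Matrix.head_cons,
    Matrix.cons_val_two, Matrix.tail_cons, Real.dist_eq, sq_abs, PiLp.toLp_apply]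
  simp only [Real.cos_add, Real.cos_sub, cos_two_pi_div_three, sin_two_pi_div_three]
  have hs : Real.sqrt (2/3) ^ 2 = 2/3 := Real.sq_sqrt (by norm_num)
  have hq : Real.sqrt 3 ^ 2 = 3 := Real.sq_sqrt (by norm_num)
  have p1 := Real.sin_sq_add_cos_sq θ
  have p2 := Real.sin_sq_add_cos_sq θ'
  set s := Real.sqrt (2/3)
  set q := Real.sqrt 3
  linear_combination ((3/2)*(r*Real.cos θ - r'*Real.cos θ')^2 + (q^2/2)*(r*Real.sin θ - r'*Real.sin θ')^2) * hs
    + (1/3)*(r*Real.sin θ - r'*Real.sin θ')^2 * hq + r^2 * p1 + r'^2 * p2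

lemma pt_zero (m θ θ' : ℝ) : pt m 0 θ = pt m 0 θ' := by
  ext i
  fin_cases i <;> simp [pt]

lemma pt_dist_diag (m r θ θ'' : ℝ) (hr : 0 ≤ r) : dist (pt m r θ) (pt m 0 θ'') = r := by
  have h := pt_dist_sq m r θ m 0 θ''
  have h2 : dist (pt m r θ) (pt m 0 θ'') ^ 2 = r ^ 2 := by rw [h]; ring
  have := dist_nonneg (x := pt m r θ) (y := pt m 0 θ'')
  nlinarith

lemma r_le_pt_dist (m r θ m' r' θ' : ℝ) (hr : 0 ≤ r) (hr' : 0 ≤ r')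
    (h : Real.cos (θ - θ') ≤ 0) : r ≤ dist (pt m r θ) (pt m' r' θ') := by
  have h1 := pt_dist_sq m r θ m' r' θ'
  have := dist_nonneg (x := pt m r θ) (y := pt m' r' θ')
  nlinarith [mul_nonneg (mul_nonneg hr hr') (neg_nonneg.2 h), sq_nonneg (m - m'), sq_nonneg r']

lemma pt_period (m r θ : ℝ) : pt m r (θ - 2*π) = pt m r θ := by
  ext i
  have e0 : θ - 2*π + 2 * π / 3 = (θ + 2*π/3) - 2*π := by ring
  have e2 : θ - 2*π - 2 * π / 3 = (θ - 2*π/3) - 2*π := by ring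
  fin_cases i <;>
    simp [pt, e0, e2, Real.cos_sub_two_pi]

lemma cross_seg (Θ m r θ m' r' θ' : ℝ) (hr : 0 ≤ r) (hr' : 0 ≤ r')
    (h1 : θ < Θ) (h2 : Θ ≤ θ') (h3 : θ' - θ < π) :
    ∃ ρ : ℝ, 0 ≤ ρ ∧ ∃ μ : ℝ,
      dist (pt m r θ) (pt μ ρ Θ) ≤ dist (pt m r θ) (pt m' r' θ') ∧
      dist (pt m' r' θ') (pt μ ρ Θ) ≤ dist (pt m r θ) (pt m' r' θ') := by
  rcases eq_or_lt_of_le hr with hr0 | hr0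
  · -- r = 0 : the point x is on the diagonal, which lies in the half-plane
    refine ⟨0, le_refl 0, m, ?_, ?_⟩
    · rw [← hr0, pt_zero m θ Θ]
      simp only [dist_self]
      exact dist_nonneg
    · rw [← hr0, pt_zero m θ Θ]
      exact le_of_eq (dist_comm _ _)
  · -- r > 0 : genuine crossing
    have hπ := Real.pi_pos
    have hα1 : 0 < Θ - θ := by linarith
    have hα2 : Θ - θ < π := by linarith
    have hsinα : 0 < Real.sin (Θ - θ) := Real.sin_pos_of_pos_of_lt_pi hα1 hα2
    have hsinβ : Real.sin (Θ - θ') ≤ 0 := by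
      apply Real.sin_nonpos_of_nonpos_of_neg_pi_le <;> linarith
    set fx := r * Real.sin (Θ - θ) with hfxdef
    set fy := r' * Real.sin (Θ - θ') with hfydef
    have hfx : 0 < fx := mul_pos hr0 hsinα
    have hfy : fy ≤ 0 := mul_nonpos_of_nonneg_of_nonpos hr' hsinβ
    have hden : 0 < fx - fy := by linarith
    set t := fx / (fx - fy) with htdef
    have ht0 : 0 ≤ t := div_nonneg hfx.le hden.le
    have ht1 : t ≤ 1 := (div_le_one hden).2 (by linarith)
    have htmul : t * (fx - fy) = fx := div_mul_cancel₀ _ hden.ne'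
    set az := (1 - t) * (r * Real.cos θ) + t * (r' * Real.cos θ') with hazdef
    set bz := (1 - t) * (r * Real.sin θ) + t * (r' * Real.sin θ') with hbzdef
    have hzero : az * Real.sin Θ - bz * Real.cos Θ = 0 := by
      have e1 : az * Real.sin Θ - bz * Real.cos Θ = fx - t * (fx - fy) := by
        rw [hazdef, hbzdef, hfxdef, hfydef, Real.sin_sub, Real.sin_sub]
        ring
      rw [e1, htmul]; ring
    set ρ := az * Real.cos Θ + bz * Real.sin Θ with hρdef
    have haz : az = ρ * Real.cos Θ := by
      linear_combination Real.sin Θ * hzero - az * (Real.sin_sq_add_cos_sq Θ)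
    have hbz : bz = ρ * Real.sin Θ := by
      linear_combination (- Real.cos Θ) * hzero - bz * (Real.sin_sq_add_cos_sq Θ)
    have hsinθθ' : 0 ≤ Real.sin (θ' - θ) :=
      Real.sin_nonneg_of_nonneg_of_le_pi (by linarith) (by linarith)
    have hkey : ρ * fx = t * (r * r') * Real.sin (θ' - θ) := by
      rw [Real.sin_sub, hfxdef, Real.sin_sub]
      linear_combination (r * Real.sin θ) * haz - (r * Real.cos θ) * hbz
    have hρ : 0 ≤ ρ := by
      by_contra hneg
      push_neg at hneg
      nlinarith [mul_nonneg (mul_nonneg ht0 (mul_nonneg hr hr')) hsinθθ']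
    have hz : pt ((1 - t) * m + t * m') ρ Θ = (1 - t) • (pt m r θ) + t • (pt m' r' θ') := by
      ext i
      fin_cases i
      · show (1 - t) * m + t * m' + Real.sqrt (2/3) * ρ * Real.cos (Θ + 2 * π / 3)
            = (1 - t) * (m + Real.sqrt (2/3) * r * Real.cos (θ + 2 * π / 3))
              + t * (m' + Real.sqrt (2/3) * r' * Real.cos (θ' + 2 * π / 3))
        simp only [Real.cos_add]
        linear_combination (-(Real.sqrt (2/3) * Real.cos (2 * π / 3))) * haz
          + (Real.sqrt (2/3) * Real.sin (2 * π / 3)) * hbz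
      · show (1 - t) * m + t * m' + Real.sqrt (2/3) * ρ * Real.cos Θ
            = (1 - t) * (m + Real.sqrt (2/3) * r * Real.cos θ)
              + t * (m' + Real.sqrt (2/3) * r' * Real.cos θ')
        linear_combination (-(Real.sqrt (2/3))) * haz
      · show (1 - t) * m + t * m' + Real.sqrt (2/3) * ρ * Real.cos (Θ - 2 * π / 3)
            = (1 - t) * (m + Real.sqrt (2/3) * r * Real.cos (θ - 2 * π / 3))
              + t * (m' + Real.sqrt (2/3) * r' * Real.cos (θ' - 2 * π / 3))
        simp only [Real.cos_sub]
        linear_combination (-(Real.sqrt (2/3) * Real.cos (2 * π / 3))) * haz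
          - (Real.sqrt (2/3) * Real.sin (2 * π / 3)) * hbz
    refine ⟨ρ, hρ, (1 - t) * m + t * m', ?_, ?_⟩
    · rw [dist_eq_norm, hz]
      have e1 : pt m r θ - ((1 - t) • pt m r θ + t • pt m' r' θ')
          = t • (pt m r θ - pt m' r' θ') := by module
      rw [e1, norm_smul, Real.norm_eq_abs, abs_of_nonneg ht0, ← dist_eq_norm]
      exact mul_le_of_le_one_left dist_nonneg ht1
    · rw [dist_eq_norm, hz]
      have e2 : pt m' r' θ' - ((1 - t) • pt m r θ + t • pt m' r' θ')
          = (1 - t) • (pt m' r' θ' - pt m r θ) := by module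
      rw [e2, norm_smul, Real.norm_eq_abs, abs_of_nonneg (by linarith : (0:ℝ) ≤ 1 - t),
        ← dist_eq_norm, dist_comm (pt m' r' θ')]
      exact mul_le_of_le_one_left dist_nonneg (by linarith)

lemma cross_w (w Θ : ℝ) (P : Set (EuclideanSpace ℝ (Fin 3)))
    (hmem : ∀ a b : ℝ, 0 ≤ b → pt a b Θ ∈ P)
    (m r θ m' r' θ' : ℝ) (hr : 0 ≤ r) (hr' : 0 ≤ r')
    (h1 : θ < Θ) (h2 : Θ ≤ θ') (h3 : θ' - θ < π)
    (hwx : w ≤ Metric.infDist (pt m r θ) P ∨ w ≤ Metric.infDist (pt m' r' θ') P) :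
    w ≤ dist (pt m r θ) (pt m' r' θ') := by
  obtain ⟨ρ, hρ, μ, hd1, hd2⟩ := cross_seg Θ m r θ m' r' θ' hr hr' h1 h2 h3
  have hz := hmem μ ρ hρ
  rcases hwx with h | h
  · exact h.trans ((Metric.infDist_le_dist_of_mem hz).trans hd1)
  · exact h.trans ((Metric.infDist_le_dist_of_mem hz).trans hd2)

lemma w_le_r (w Θ : ℝ) (P : Set (EuclideanSpace ℝ (Fin 3)))
    (hmem : ∀ a b : ℝ, 0 ≤ b → pt a b Θ ∈ P)
    (m r θ : ℝ) (hr : 0 ≤ r) (hw : w ≤ Metric.infDist (pt m r θ) P) : w ≤ r :=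
  hw.trans ((Metric.infDist_le_dist_of_mem (hmem m 0 le_rfl)).trans_eq
    (pt_dist_diag m r θ Θ hr))


/-- Lemma 1: in the partition `A, B, C, D` of ℝ³ built from the half-plane `P` at angle
`Θ ∈ [π/3, π]` around the diagonal, with padding `w > 0`, the non-neighbouring pairs
`(A,D)`, `(A,C)`, `(B,D)` are at Euclidean distance at least `w` from each other. -/
theorem stmt_17 (w : ℝ) (hw : 0 < w) (Θ : ℝ) (hΘ : Θ ∈ Set.Icc (π / 3) π)
    (coord : ℝ → ℝ → ℝ → EuclideanSpace ℝ (Fin 3))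
    (hcoord : ∀ m r θ, coord m r θ =
      ![m + Real.sqrt (2 / 3) * r * Real.cos (θ + 2 * π / 3),
        m + Real.sqrt (2 / 3) * r * Real.cos θ,
        m + Real.sqrt (2 / 3) * r * Real.cos (θ - 2 * π / 3)])
    (Diag : Set (EuclideanSpace ℝ (Fin 3)))
    (hDiag : Diag = {q | ∃ t : ℝ, ∀ i, q i = t})
    (P : Set (EuclideanSpace ℝ (Fin 3)))
    (hP : P = {q | ∃ m r : ℝ, 0 ≤ r ∧ q = coord m r Θ})
    (A B C D : Set (EuclideanSpace ℝ (Fin 3)))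
    (hA : A = {q | ∃ m r θ : ℝ, 0 ≤ r ∧ q = coord m r θ ∧
      π / 3 ≤ θ ∧ θ < Θ ∧ w ≤ Metric.infDist q P})
    (hB : B = {q | ∃ m r θ : ℝ, 0 ≤ r ∧ q = coord m r θ ∧
      ((π / 3 ≤ θ ∧ θ < Θ ∧ Metric.infDist q P < w) ∨
        (0 ≤ θ ∧ θ < π / 3) ∨ (5 * π / 3 ≤ θ ∧ θ < 2 * π))})
    (hC : C = {q | (∃ m r θ : ℝ, 0 ≤ r ∧ q = coord m r θ ∧
      ((Θ ≤ θ ∧ θ < π ∧ Metric.infDist q P < w) ∨ (π ≤ θ ∧ θ < 5 * π / 3))) ∧ q ∉ Diag})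
    (hD : D = {q | ∃ m r θ : ℝ, 0 ≤ r ∧ q = coord m r θ ∧
      Θ ≤ θ ∧ θ < π ∧ w ≤ Metric.infDist q P}) :
    (∀ x ∈ A, ∀ y ∈ D, w ≤ dist x y) ∧
      (∀ x ∈ A, ∀ y ∈ C, w ≤ dist x y) ∧
      ∀ x ∈ B, ∀ y ∈ D, w ≤ dist x y := by
  obtain ⟨hΘ1, hΘ2⟩ := hΘ
  have hπ := Real.pi_pos
  have hcp : coord = pt := by funext m r θ; exact (WithLp.toLp_ofLp (x := coord m r θ)).symm.trans (congrArg (WithLp.toLp 2) (hcoord m r θ))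
  subst hcp
  have hmem : ∀ a b : ℝ, 0 ≤ b → pt a b Θ ∈ P := by
    intro a b hb; rw [hP]; exact ⟨a, b, hb, rfl⟩
  refine ⟨?_, ?_, ?_⟩
  · -- A vs D
    intro x hx y hy
    rw [hA] at hx; rw [hD] at hy
    obtain ⟨m, r, θ, hr, rfl, ha1, ha2, hwx⟩ := hx
    obtain ⟨m', r', θ', hr', rfl, hd1, hd2, hwy⟩ := hy
    exact cross_w w Θ P hmem m r θ m' r' θ' hr hr' ha2 hd1 (by linarith) (Or.inl hwx)
  · -- A vs C
    intro x hx y hy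
    rw [hA] at hx; rw [hC] at hy
    obtain ⟨m, r, θ, hr, rfl, ha1, ha2, hwx⟩ := hx
    obtain ⟨⟨m', r', θ', hr', rfl, hcase⟩, -⟩ := hy
    rcases hcase with ⟨hc1, hc2, -⟩ | ⟨hc1, hc2⟩
    · exact cross_w w Θ P hmem m r θ m' r' θ' hr hr' ha2 hc1 (by linarith) (Or.inl hwx)
    · by_cases hlt : θ' - θ < π
      · exact cross_w w Θ P hmem m r θ m' r' θ' hr hr' ha2 (hΘ2.trans hc1) hlt (Or.inl hwx)
      · push_neg at hlt
        have hwr : w ≤ r := w_le_r w Θ P hmem m r θ hr hwx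
        have hcos : Real.cos (θ - θ') ≤ 0 := by
          have e : θ - θ' = -(θ' - θ) := by ring
          rw [e, Real.cos_neg]
          exact Real.cos_nonpos_of_pi_div_two_le_of_le (by linarith) (by linarith)
        exact hwr.trans (r_le_pt_dist m r θ m' r' θ' hr hr' hcos)
  · -- B vs D
    intro x hx y hy
    rw [hB] at hx; rw [hD] at hy
    obtain ⟨m, r, θ, hr, rfl, hcase⟩ := hx
    obtain ⟨m', r', θ', hr', rfl, hd1, hd2, hwy⟩ := hy
    rcases hcase with ⟨hb1, hb2, -⟩ | ⟨hb1, hb2⟩ | ⟨hb1, hb2⟩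
    · exact cross_w w Θ P hmem m r θ m' r' θ' hr hr' hb2 hd1 (by linarith) (Or.inr hwy)
    · exact cross_w w Θ P hmem m r θ m' r' θ' hr hr' (lt_of_lt_of_le hb2 hΘ1) hd1
        (by linarith) (Or.inr hwy)
    · rw [← pt_period m r θ]
      by_cases hlt : θ' - (θ - 2*π) < π
      · exact cross_w w Θ P hmem m r (θ - 2*π) m' r' θ' hr hr' (by linarith) hd1 hlt
          (Or.inr hwy)
      · push_neg at hlt
        have hwr : w ≤ r' := w_le_r w Θ P hmem m' r' θ' hr' hwy
        have hcos : Real.cos (θ' - (θ - 2*π)) ≤ 0 :=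
          Real.cos_nonpos_of_pi_div_two_le_of_le (by linarith) (by linarith)
        refine hwr.trans ?_
        rw [dist_comm]
        exact r_le_pt_dist m' r' θ' m r (θ - 2*π) hr' hr hcos
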